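/- Let C > 0 and 0 < α < 1 be constants such that Δ_ρ^S(m) ≤ C m^α and N_ρ^S(m) ≤ exp(C m^α) for all m (inverted orbit bounds for the action of the first Grigorchuk group on the orbit of ρ = 1^∞). Then there is a constant C_3 > 0 such that |P_3(ℓ)| ≤ exp(C_3 ℓ^α log ℓ) for every sufficiently large n and every ℓ ≤ r_n/3. -/

import Mathlib

noncomputable section

/-! ### Generalities: the group of self-homeomorphisms -/

instance homeoGroup {X : Type*} [TopologicalSpace X] : Group (X ≃ₜ X) where
  mul f g := g.trans f
  one := Homeomorph.refl X
  inv := Homeomorph.symm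
  mul_assoc a b c := Homeomorph.ext fun _ => rfl
  one_mul a := Homeomorph.ext fun _ => rfl
  mul_one a := Homeomorph.ext fun _ => rfl
  inv_mul_cancel a := Homeomorph.ext a.symm_apply_apply

/-! ### Homeomorphisms of a product with a discrete factor -/

theorem cont_fibered {X Y Z : Type*} [TopologicalSpace X] [TopologicalSpace Y]
    [DiscreteTopology Y] [TopologicalSpace Z] (f : X → Y → Z) (hf : ∀ y, Continuous (f · y)) :
    Continuous (fun p : X × Y => f p.1 p.2) := by
  rw [continuous_iff_continuousAt]
  rintro ⟨x, y⟩
  have hmem : {p : X × Y | p.2 = y} ∈ nhds (x, y) := by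
    have ho : IsOpen {p : X × Y | p.2 = y} := by
      have h : ({p : X × Y | p.2 = y}) = Prod.snd ⁻¹' {y} := rfl
      rw [h]; exact (isOpen_discrete _).preimage continuous_snd
    exact ho.mem_nhds rfl
  refine ContinuousAt.congr (((hf y).comp continuous_fst).continuousAt) ?_
  filter_upwards [hmem] with p hp
  simp [hp]

/-- The homeomorphism of `X × Y`, `Y` discrete, acting on each fiber `X × {y}`
by the homeomorphism `F y`. -/
def fiberedHomeo {X Y : Type*} [TopologicalSpace X] [TopologicalSpace Y] [DiscreteTopology Y]
    (F : Y → X ≃ₜ X) : (X × Y) ≃ₜ (X × Y) where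
  toEquiv := Equiv.prodCongrLeft fun y => (F y).toEquiv
  continuous_toFun := by
    refine Continuous.prodMk ?_ continuous_snd
    exact cont_fibered (fun x y => F y x) (fun y => (F y).continuous)
  continuous_invFun := by
    refine Continuous.prodMk ?_ continuous_snd
    exact cont_fibered (fun x y => (F y).symm x) (fun y => (F y).symm.continuous)

/-- The homeomorphism of `X × Y`, `Y` discrete, permuting the fibers according to a
permutation of `Y` and acting trivially in the `X`-coordinate. -/
def basePermHomeo {X Y : Type*} [TopologicalSpace X] [TopologicalSpace Y] [DiscreteTopology Y]
    (e : Equiv.Perm Y) : (X × Y) ≃ₜ (X × Y) where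
  toEquiv := Equiv.prodCongr (Equiv.refl X) e
  continuous_toFun :=
    continuous_fst.prodMk (continuous_of_discreteTopology.comp continuous_snd)
  continuous_invFun :=
    continuous_fst.prodMk (continuous_of_discreteTopology.comp continuous_snd)

/-! ### The Cantor set -/

/-- The Cantor set `{0,1}^ℕ`. -/
abbrev Cantor : Type := ℕ → Bool

/-- Prepending a finite word to an element of the Cantor set. -/
def wordAppend (w : List Bool) (ξ : Cantor) : Cantor :=
  fun n => if h : n < w.length then w[n] else ξ (n - w.length)

/-- A dyadic partition set: a finite set of binary words whose cylinders partition
the Cantor set. -/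
def IsDyadicPartition (A : Finset (List Bool)) : Prop :=
  ∀ ξ : Cantor, ∃! w : List Bool, w ∈ A ∧ ∃ ξ' : Cantor, wordAppend w ξ' = ξ

/-- The defining condition for elements of Thompson's group `V`: a homeomorphism of the
Cantor set given by prefix replacement along a bijection of two dyadic partition sets. -/
def IsThompsonVMap (γ : Cantor ≃ₜ Cantor) : Prop :=
  ∃ (A B : Finset (List Bool)) (f : List Bool → List Bool),
    IsDyadicPartition A ∧ IsDyadicPartition B ∧ A.card = B.card ∧ Set.BijOn f A B ∧
    ∀ w ∈ A, ∀ ξ : Cantor, γ (wordAppend w ξ) = wordAppend (f w) ξ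

/-- Thompson's group `V`, as a group of homeomorphisms of the Cantor set. -/
def ThompsonV : Subgroup (Cantor ≃ₜ Cantor) :=
  Subgroup.closure {γ | IsThompsonVMap γ}

theorem cantor_core_continuous (G : ℕ → Bool → Bool → Bool → Bool → Bool → Bool → Bool) :
    Continuous (fun ξ : Cantor =>
      (fun n => G n (ξ 0) (ξ 1) (ξ 2) (ξ (n - 1)) (ξ n) (ξ (n + 1)) : Cantor)) := by
  apply continuous_pi
  intro n
  have h : Continuous (fun ξ : Cantor =>
      ((ξ 0, ξ 1, ξ 2, ξ (n - 1), ξ n, ξ (n + 1)) : Bool × Bool × Bool × Bool × Bool × Bool)) :=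
    (continuous_apply 0).prodMk ((continuous_apply 1).prodMk
      ((continuous_apply 2).prodMk ((continuous_apply (n-1)).prodMk
      ((continuous_apply n).prodMk (continuous_apply (n+1))))))
  exact (continuous_of_discreteTopology
    (f := fun p : Bool × Bool × Bool × Bool × Bool × Bool =>
      G n p.1 p.2.1 p.2.2.1 p.2.2.2.1 p.2.2.2.2.1 p.2.2.2.2.2)).comp h

def consC (b : Bool) (ξ : Cantor) : Cantor := fun n => match n with
  | 0 => b
  | n+1 => ξ n

def shiftC (ξ : Cantor) : Cantor := fun n => ξ (n + 1)

theorem consC_continuous (b : Bool) : Continuous (consC b) := by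
  apply continuous_pi
  intro n
  match n with
  | 0 => exact continuous_const
  | n+1 => exact continuous_apply n

theorem shiftC_continuous : Continuous shiftC :=
  continuous_pi fun n => continuous_apply (n + 1)

/-! ### Thompson's generator `X₀` as a homeomorphism of the Cantor set -/

def x0core (n : ℕ) (b0 b1 : Bool) (w v u : Bool) : Bool :=
  if b0 = false then
    (if b1 = false then u
     else if n = 0 then true else if n = 1 then false else v)
  else (if n ≤ 1 then true else w)

def x0invcore (n : ℕ) (b0 b1 : Bool) (w v u : Bool) : Bool :=
  if b0 = false then (if n ≤ 1 then false else w)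
  else if b1 = false then (if n = 0 then false else if n = 1 then true else v)
  else (if n = 0 then true else u)

/-- `X₀ : 00ξ ↦ 0ξ`, `01ξ ↦ 10ξ`, `1ξ ↦ 11ξ`. -/
def x0fun (ξ : Cantor) : Cantor := fun n => x0core n (ξ 0) (ξ 1) (ξ (n - 1)) (ξ n) (ξ (n + 1))

def x0inv (ξ : Cantor) : Cantor := fun n => x0invcore n (ξ 0) (ξ 1) (ξ (n - 1)) (ξ n) (ξ (n + 1))

theorem x0_left_inv : Function.LeftInverse x0inv x0fun := by
  intro ξ
  funext n
  rcases hb0 : ξ 0 with _ | _ <;> rcases hb1 : ξ 1 with _ | _ <;>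
    rcases n with _ | _ | n <;>
    simp [x0fun, x0inv, x0core, x0invcore, hb0, hb1]

theorem x0_right_inv : Function.RightInverse x0inv x0fun := by
  intro ξ
  funext n
  rcases hb0 : ξ 0 with _ | _ <;> rcases hb1 : ξ 1 with _ | _ <;>
    rcases n with _ | _ | n <;>
    simp [x0fun, x0inv, x0core, x0invcore, hb0, hb1]

/-- Thompson's generator `X₀` as a homeomorphism of the Cantor set. -/
def X0c : Cantor ≃ₜ Cantor where
  toEquiv := ⟨x0fun, x0inv, x0_left_inv, x0_right_inv⟩
  continuous_toFun := cantor_core_continuous fun n b0 b1 _ w v u => x0core n b0 b1 w v u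
  continuous_invFun := cantor_core_continuous fun n b0 b1 _ w v u => x0invcore n b0 b1 w v u

/-- The homeomorphism `Cantor ≃ₜ Cantor × Bool` splitting off the first letter. -/
def splitHomeo : Cantor ≃ₜ Cantor × Bool where
  toEquiv := ⟨fun ξ => (shiftC ξ, ξ 0), fun p => consC p.2 p.1,
    fun ξ => by funext n; rcases n with _ | n <;> rfl,
    fun p => by
      refine Prod.ext ?_ rfl
      funext n; rfl⟩
  continuous_toFun := shiftC_continuous.prodMk (continuous_apply 0)
  continuous_invFun := by
    apply continuous_pi
    intro n
    match n with
    | 0 => exact continuous_snd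
    | n+1 => exact (continuous_apply n).comp continuous_fst

/-- Thompson's generator `X₁ = 1X₀`: the copy of `X₀` supported on the cylinder `1C`. -/
def X1c : Cantor ≃ₜ Cantor :=
  splitHomeo.trans ((fiberedHomeo fun b =>
    if b = true then X0c else Homeomorph.refl Cantor).trans splitHomeo.symm)

end

noncomputable section

/-! ### The Grigorchuk generators -/

namespace Grig

def aFun : List Bool → List Bool
  | [] => []
  | x :: w => (!x) :: w

mutual
  def bFun : List Bool → List Bool
    | [] => []
    | false :: w => false :: aFun w
    | true :: w => true :: cFun w
  def cFun : List Bool → List Bool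
    | [] => []
    | false :: w => false :: aFun w
    | true :: w => true :: dFun w
  def dFun : List Bool → List Bool
    | [] => []
    | false :: w => false :: w
    | true :: w => true :: bFun w
end

theorem aFun_involutive : Function.Involutive aFun := by
  intro w
  match w with
  | [] => rfl
  | x :: w => simp [aFun]

theorem bcd_involutive :
    ∀ w : List Bool, bFun (bFun w) = w ∧ cFun (cFun w) = w ∧ dFun (dFun w) = w := by
  intro w
  induction w with
  | nil => exact ⟨rfl, rfl, rfl⟩
  | cons x w ih =>
    rcases x with _ | _
    · simp [bFun, cFun, dFun, aFun_involutive w]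
    · simp [bFun, cFun, dFun, ih.1, ih.2.1, ih.2.2]

theorem bFun_involutive : Function.Involutive bFun := fun w => (bcd_involutive w).1
theorem cFun_involutive : Function.Involutive cFun := fun w => (bcd_involutive w).2.1
theorem dFun_involutive : Function.Involutive dFun := fun w => (bcd_involutive w).2.2

theorem aFun_length : ∀ w : List Bool, (aFun w).length = w.length := by
  intro w
  match w with
  | [] => rfl
  | x :: w => simp [aFun]

theorem bcd_length : ∀ w : List Bool,
    (bFun w).length = w.length ∧ (cFun w).length = w.length ∧ (dFun w).length = w.length := by
  intro w
  induction w with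
  | nil => exact ⟨rfl, rfl, rfl⟩
  | cons x w ih =>
    rcases x with _ | _
    · simp [bFun, cFun, dFun, aFun_length w]
    · simp [bFun, cFun, dFun, ih.1, ih.2.1, ih.2.2]

theorem bFun_length : ∀ w, (bFun w).length = w.length := fun w => (bcd_length w).1
theorem cFun_length : ∀ w, (cFun w).length = w.length := fun w => (bcd_length w).2.1
theorem dFun_length : ∀ w, (dFun w).length = w.length := fun w => (bcd_length w).2.2

/-- The generators of the first Grigorchuk group as permutations of the vertex set
`{0,1}*` of the rooted binary tree. -/
def aPerm : Equiv.Perm (List Bool) := aFun_involutive.toPerm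
def bPerm : Equiv.Perm (List Bool) := bFun_involutive.toPerm
def cPerm : Equiv.Perm (List Bool) := cFun_involutive.toPerm
def dPerm : Equiv.Perm (List Bool) := dFun_involutive.toPerm

/-- The generating set `S = {a, b, c, d}` (a set of involutions). -/
def Sset : Set (Equiv.Perm (List Bool)) := {aPerm, bPerm, cPerm, dPerm}

/-- The first Grigorchuk group. -/
def Grigorchuk : Subgroup (Equiv.Perm (List Bool)) := Subgroup.closure Sset

/-- Word length with respect to `S = {a, b, c, d}`. -/
def wordLength (g : Equiv.Perm (List Bool)) : ℕ :=
  sInf {k | ∃ l : List (Equiv.Perm (List Bool)),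
    (∀ x ∈ l, x ∈ Sset) ∧ l.length = k ∧ l.prod = g}

/-- The growth function of the first Grigorchuk group with respect to `S`. -/
def growthGrig (m : ℕ) : ℕ :=
  Nat.card {g : Equiv.Perm (List Bool) |
    ∃ l : List (Equiv.Perm (List Bool)), (∀ x ∈ l, x ∈ Sset) ∧ l.length ≤ m ∧ l.prod = g}

/-! ### Level transfer -/

def levelFun (n : ℕ) (f : List Bool → List Bool) (v : Fin n → Bool) : Fin n → Bool :=
  fun i => (f (List.ofFn v)).getD i false

theorem levelFun_involutive (n : ℕ) (f : List Bool → List Bool)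
    (hlen : ∀ l, (f l).length = l.length) (hinv : Function.Involutive f) :
    Function.Involutive (levelFun n f) := by
  intro v
  have key : ∀ u : Fin n → Bool, List.ofFn (levelFun n f u) = f (List.ofFn u) := by
    intro u
    apply List.ext_getElem
    · simp [hlen]
    · intro i h1 h2
      simp only [List.getElem_ofFn]
      simp [levelFun, List.getD_eq_getElem, h2]
  funext i
  simp only [levelFun, key v, hinv (List.ofFn v)]
  simp [List.getD_eq_getElem]

/-- The images `a_n, b_n, c_n, d_n` of the Grigorchuk generators in `Sym(X_n)`,
where the `n`-th level `X_n = {0,1}^n` is identified with `Fin n → Bool`. -/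
def aLev (n : ℕ) : Equiv.Perm (Fin n → Bool) :=
  (levelFun_involutive n aFun aFun_length aFun_involutive).toPerm
def bLev (n : ℕ) : Equiv.Perm (Fin n → Bool) :=
  (levelFun_involutive n bFun bFun_length bFun_involutive).toPerm
def cLev (n : ℕ) : Equiv.Perm (Fin n → Bool) :=
  (levelFun_involutive n cFun cFun_length cFun_involutive).toPerm
def dLev (n : ℕ) : Equiv.Perm (Fin n → Bool) :=
  (levelFun_involutive n dFun dFun_length dFun_involutive).toPerm

end Grig

/-! ### The space `C_{Y_n}` and the generating set `T_n` -/

namespace TV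

/-- The `n`-th level `X_n = {0,1}^n` of the binary tree. -/
abbrev XL (n : ℕ) : Type := Fin n → Bool

/-- `C_{Y_n} = C × Y_n` with `Y_n = X_n × {1,2,3,4}`; the sheets are indexed by `Fin 4`. -/
abbrev Mn (n : ℕ) : Type := Cantor × (XL n × Fin 4)

/-- `ρ_n = 1^n`. -/
def rhoL (n : ℕ) : XL n := fun _ => true
/-- `η_n = 1^{n-1}0`. -/
def etaL (n : ℕ) : XL n := fun i => decide ((i : ℕ) < n - 1)
/-- `θ_n = 01^{n-1}`. -/
def thetaL (n : ℕ) : XL n := fun i => decide (0 < (i : ℕ))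

/-- A type 1 generator: an element of `S_n` acting diagonally on the four sheets. -/
def type1Gen (n : ℕ) (s : Equiv.Perm (XL n)) : Mn n ≃ₜ Mn n :=
  basePermHomeo (s.prodCongr (Equiv.refl (Fin 4)))

/-- The set of type 1 generators (the truncated Grigorchuk generators). -/
def Type1Set (n : ℕ) : Set (Mn n ≃ₜ Mn n) :=
  {type1Gen n (Grig.aLev n), type1Gen n (Grig.bLev n),
   type1Gen n (Grig.cLev n), type1Gen n (Grig.dLev n)}

/-- A type 2 generator: an element of `Sym(4)_{η_n}`. -/
def type2Gen (n : ℕ) (π : Equiv.Perm (Fin 4)) : Mn n ≃ₜ Mn n :=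
  basePermHomeo (Equiv.prodCongrRight fun x : XL n =>
    if x = etaL n then π else Equiv.refl (Fin 4))

/-- The copy `Sym(4)_{η_n}` of the symmetric group over `η_n` (type 2 generators). -/
def Type2Set (n : ℕ) : Set (Mn n ≃ₜ Mn n) := Set.range (type2Gen n)

/-- The linking transposition `τ_n` (type 3), exchanging the first sheets over
`ρ_n` and `θ_n`. -/
def tauN (n : ℕ) : Mn n ≃ₜ Mn n :=
  basePermHomeo (Equiv.swap (rhoL n, (0 : Fin 4)) (thetaL n, (0 : Fin 4)))

/-- `X₁^{(n)}`: the copy of `X₀` supported on the fourth sheet over `ρ_n` (type 4). -/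
def X1n (n : ℕ) : Mn n ≃ₜ Mn n :=
  fiberedHomeo fun y : XL n × Fin 4 =>
    if y = (rhoL n, (3 : Fin 4)) then X0c else Homeomorph.refl Cantor

/-! The homeomorphism of `C × {1,2,3,4}` acting as `X₀` on `D = C_2 ⊔ C_3` (sheets `1`, `2`
in the `Fin 4` indexing) under the identification `(ξ, i) ↦ (i-2)ξ`, and trivial elsewhere. -/

def x0dSheet (i : Fin 4) (b0 : Bool) : Fin 4 :=
  if i = 1 then (if b0 = false then 1 else 2) else i

def x0dCore (i : Fin 4) (n : ℕ) (b0 w v u : Bool) : Bool :=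
  if i = 1 then (if b0 = false then u else if n = 0 then false else v)
  else if i = 2 then (if n = 0 then true else w)
  else v

def x0dSheetInv (i : Fin 4) (b0 : Bool) : Fin 4 :=
  if i = 2 then (if b0 = false then 1 else 2) else i

def x0dCoreInv (i : Fin 4) (n : ℕ) (b0 w v u : Bool) : Bool :=
  if i = 1 then (if n = 0 then false else w)
  else if i = 2 then (if b0 = false then (if n = 0 then true else v) else u)
  else v

def x0dFun (p : Cantor × Fin 4) : Cantor × Fin 4 :=
  ((fun n => x0dCore p.2 n (p.1 0) (p.1 (n - 1)) (p.1 n) (p.1 (n + 1))),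
    x0dSheet p.2 (p.1 0))

def x0dInvFun (p : Cantor × Fin 4) : Cantor × Fin 4 :=
  ((fun n => x0dCoreInv p.2 n (p.1 0) (p.1 (n - 1)) (p.1 n) (p.1 (n + 1))),
    x0dSheetInv p.2 (p.1 0))

theorem x0d_left_inv : Function.LeftInverse x0dInvFun x0dFun := by
  rintro ⟨ξ, i⟩
  rcases hb0 : ξ 0 with _ | _ <;> fin_cases i <;>
    refine Prod.ext (funext fun n => ?_) ?_ <;>
    first
      | (rcases n with _ | n <;>
          simp [x0dFun, x0dInvFun, x0dCore, x0dCoreInv, x0dSheet, x0dSheetInv, hb0])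
      | simp [x0dFun, x0dInvFun, x0dCore, x0dCoreInv, x0dSheet, x0dSheetInv, hb0]

theorem x0d_right_inv : Function.RightInverse x0dInvFun x0dFun := by
  rintro ⟨ξ, i⟩
  rcases hb0 : ξ 0 with _ | _ <;> fin_cases i <;>
    refine Prod.ext (funext fun n => ?_) ?_ <;>
    first
      | (rcases n with _ | n <;>
          simp [x0dFun, x0dInvFun, x0dCore, x0dCoreInv, x0dSheet, x0dSheetInv, hb0])
      | simp [x0dFun, x0dInvFun, x0dCore, x0dCoreInv, x0dSheet, x0dSheetInv, hb0]

theorem x0dFun_continuous : Continuous x0dFun := by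
  have h : Continuous fun p : Cantor × Fin 4 => x0dFun (p.1, p.2) := by
    refine cont_fibered (Z := Cantor × Fin 4) (fun ξ i => x0dFun (ξ, i)) fun i => ?_
    refine Continuous.prodMk ?_ ?_
    · exact cantor_core_continuous fun n b0 _ _ w v u => x0dCore i n b0 w v u
    · exact Continuous.comp
        (continuous_of_discreteTopology (α := Bool) (f := x0dSheet i)) (continuous_apply 0)
  simpa using h

theorem x0dInvFun_continuous : Continuous x0dInvFun := by
  have h : Continuous fun p : Cantor × Fin 4 => x0dInvFun (p.1, p.2) := by
    refine cont_fibered (Z := Cantor × Fin 4) (fun ξ i => x0dInvFun (ξ, i)) fun i => ?_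
    refine Continuous.prodMk ?_ ?_
    · exact cantor_core_continuous fun n b0 _ _ w v u => x0dCoreInv i n b0 w v u
    · exact Continuous.comp
        (continuous_of_discreteTopology (α := Bool) (f := x0dSheetInv i)) (continuous_apply 0)
  simpa using h

def X0D : (Cantor × Fin 4) ≃ₜ (Cantor × Fin 4) where
  toEquiv := ⟨x0dFun, x0dInvFun, x0d_left_inv, x0d_right_inv⟩
  continuous_toFun := x0dFun_continuous
  continuous_invFun := x0dInvFun_continuous

/-- Reshuffling `C × (X_n × {1,…,4}) ≃ₜ (C × {1,…,4}) × X_n`. -/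
def reshuffle (n : ℕ) : Mn n ≃ₜ (Cantor × Fin 4) × XL n :=
  ((Homeomorph.refl Cantor).prodCongr (Homeomorph.prodComm (XL n) (Fin 4))).trans
    (Homeomorph.prodAssoc Cantor (Fin 4) (XL n)).symm

/-- `X₀^{(n)}`: acting as `X₀` on `D_n = C_{(ρ_n,2)} ⊔ C_{(ρ_n,3)}` (type 4). -/
def X0n (n : ℕ) : Mn n ≃ₜ Mn n :=
  (reshuffle n).trans ((fiberedHomeo fun x : XL n =>
    if x = rhoL n then X0D else Homeomorph.refl (Cantor × Fin 4)).trans (reshuffle n).symm)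

/-- The type 4 generators. -/
def Type4Set (n : ℕ) : Set (Mn n ≃ₜ Mn n) := {X0n n, X1n n}

/-- The generating set `T_n`. -/
def TnSet (n : ℕ) : Set (Mn n ≃ₜ Mn n) :=
  Type1Set n ∪ Type2Set n ∪ {tauN n} ∪ Type4Set n

/-- The group `W_n = ⟨T_n⟩`. -/
def Wn (n : ℕ) : Subgroup (Mn n ≃ₜ Mn n) := Subgroup.closure (TnSet n)

/-- The generators of types `2`, `3` and `4`. -/
def typeSet (n : ℕ) : ℕ → Set (Mn n ≃ₜ Mn n)
  | 2 => Type2Set n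
  | 3 => {tauN n}
  | 4 => Type4Set n
  | _ => ∅

end TV

end
/-! ### The boundary action and actions of words -/

/-- The (continuous extension to the boundary `∂T = {0,1}^ℕ` of the) action of a tree
automorphism on the boundary of the rooted binary tree. -/
def boundaryAct (g : Equiv.Perm (List Bool)) (ξ : ℕ → Bool) : ℕ → Bool :=
  fun n => (g (List.ofFn fun i : Fin (n + 1) => ξ i)).getD n false

/-- Applying a word of generators to a vertex, letter by letter: the right action of the
word `l` (the generators in `S` are involutions). -/
def wordApply (l : List (Equiv.Perm (List Bool))) (v : List Bool) : List Bool :=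
  l.foldl (fun v s => s v) v

/-- The right action of a word on a boundary point. -/
def wordApplyB (l : List (Equiv.Perm (List Bool))) (ξ : ℕ → Bool) : ℕ → Bool :=
  l.foldl (fun ξ s => boundaryAct s ξ) ξ

/-- The boundary point `ρ = 1^∞`. -/
def rhoInf : ℕ → Bool := fun _ => true

/-- The vertex `ρ_n = 1^n` of the `n`-th level. -/
def rhoVertex (n : ℕ) : List Bool := List.replicate n true

/-- The vertex `η_n = 1^{n-1}0` of the `n`-th level. -/
def etaVertex (n : ℕ) : List Bool := List.replicate (n - 1) true ++ [false]
/-! ### Inverted orbits of the Grigorchuk group on the orbit of `ρ = 1^∞` -/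

/-- The inverted orbit `O_ξ(l) = {ξ, ξ·s_ℓ, ξ·s_{ℓ-1}s_ℓ, …, ξ·s_1⋯s_ℓ}` of the word
`l = s_1 ⋯ s_ℓ` at the boundary point `ξ`. -/
def invOrbitB (l : List (Equiv.Perm (List Bool))) (ξ : ℕ → Bool) : Set (ℕ → Bool) :=
  {x | ∃ i : ℕ, x = wordApplyB (l.drop i) ξ}

/-- The inverted orbit growth function `Δ_ρ^S` of the Grigorchuk group acting on the
orbit of `ρ = 1^∞`. -/
noncomputable def DeltaB (m : ℕ) : ℕ :=
  sSup {k | ∃ l : List (Equiv.Perm (List Bool)),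
    (∀ x ∈ l, x ∈ Grig.Sset) ∧ l.length ≤ m ∧ k = Nat.card (invOrbitB l rhoInf)}

/-- The number `N_ρ^S(m)` of distinct inverted orbits of words of length at most `m`. -/
noncomputable def NorbB (m : ℕ) : ℕ :=
  Nat.card {O : Set (ℕ → Bool) | ∃ l : List (Equiv.Perm (List Bool)),
    (∀ x ∈ l, x ∈ Grig.Sset) ∧ l.length ≤ m ∧ O = invOrbitB l rhoInf}

noncomputable section

open Classical in
/-- The `S_n ∪ {1}`-part of a letter of `T_n` (as in the normal form). -/
noncomputable def gpart (n : ℕ) (t : TV.Mn n ≃ₜ TV.Mn n) : TV.Mn n ≃ₜ TV.Mn n :=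
  if t ∈ TV.Type1Set n then t else 1

open Classical in
/-- The type-`j` part of a letter of `T_n` (as in the normal form), `j ∈ {2,3,4}`. -/
noncomputable def apart (n j : ℕ) (t : TV.Mn n ≃ₜ TV.Mn n) : TV.Mn n ≃ₜ TV.Mn n :=
  if t ∈ TV.typeSet n j then t else 1

/-- The first factor `p₁` of the normal form of the word `w` over `T_n`. -/
noncomputable def p1fac (n : ℕ) (w : List (TV.Mn n ≃ₜ TV.Mn n)) : TV.Mn n ≃ₜ TV.Mn n :=
  (w.map (gpart n)).prod

/-- The factor `p_j` (`j ∈ {2,3,4}`) of the normal form of the word `w = t_1 ⋯ t_ℓ` over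
`T_n`: the product `(a_1^{(j)})^{g_1 ⋯ g_ℓ} (a_2^{(j)})^{g_2 ⋯ g_ℓ} ⋯ (a_ℓ^{(j)})^{g_ℓ}`
of conjugates (`x^h = h⁻¹xh`), where `g_i` and `a_i^{(j)}` are the type-1 part and the
type-`j` part of the letter `t_i`. -/
noncomputable def pjfac (n j : ℕ) (w : List (TV.Mn n ≃ₜ TV.Mn n)) : TV.Mn n ≃ₜ TV.Mn n :=
  (List.ofFn fun i : Fin w.length =>
    (((w.map (gpart n)).drop (i : ℕ)).prod)⁻¹ * apart n j (w.get i) *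
      ((w.map (gpart n)).drop (i : ℕ)).prod).prod

/-- The set `P_1(ℓ)`: all elements occurring as the first factor of the normal form of
some word over `T_n` of length at most `ℓ`. -/
def P1set (n ℓ : ℕ) : Set (TV.Mn n ≃ₜ TV.Mn n) :=
  {p | ∃ w : List (TV.Mn n ≃ₜ TV.Mn n),
    (∀ t ∈ w, t ∈ TV.TnSet n) ∧ w.length ≤ ℓ ∧ p = p1fac n w}

/-- The set `P_j(ℓ)`: all elements occurring as the `j`-th factor of the normal form of
some word over `T_n` of length at most `ℓ`. -/
def Pjset (n j ℓ : ℕ) : Set (TV.Mn n ≃ₜ TV.Mn n) :=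
  {p | ∃ w : List (TV.Mn n ≃ₜ TV.Mn n),
    (∀ t ∈ w, t ∈ TV.TnSet n) ∧ w.length ≤ ℓ ∧ p = pjfac n j w}

end

noncomputable section CountingAux
open Equiv

/-! #### List helpers -/

theorem getD_take' {α : Type*} (l : List α) (d : α) {m k : ℕ} (h : m < k) :
    (l.take k).getD m d = l.getD m d := by
  simp [List.getD_eq_getElem?_getD, List.getElem?_take_of_lt h]

/-- The prefix of length `k` of a boundary point. -/
def prefixL (k : ℕ) (ξ : ℕ → Bool) : List Bool := List.ofFn fun i : Fin k => ξ i

@[simp] theorem prefixL_length (k : ℕ) (ξ : ℕ → Bool) : (prefixL k ξ).length = k := by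
  simp [prefixL]

theorem prefixL_take {k n : ℕ} (h : k ≤ n) (ξ : ℕ → Bool) :
    prefixL k ξ = (prefixL n ξ).take k := by
  apply List.ext_getElem?
  intro i
  by_cases hik : i < k
  · rw [List.getElem?_take_of_lt hik]
    have h1 : i < (prefixL k ξ).length := by simpa using hik
    have h2 : i < (prefixL n ξ).length := by simpa using lt_of_lt_of_le hik h
    rw [List.getElem?_eq_getElem h1, List.getElem?_eq_getElem h2]
    simp [prefixL]
  · push_neg at hik
    rw [List.getElem?_eq_none (by simpa using hik),
      List.getElem?_eq_none (by simp [Nat.le_min]; omega)]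

theorem getD_prefixL {k m : ℕ} (h : m < k) (ξ : ℕ → Bool) :
    (prefixL k ξ).getD m false = ξ m := by
  have h1 : m < (prefixL k ξ).length := by simpa using h
  rw [List.getD_eq_getElem?_getD, List.getElem?_eq_getElem h1]
  simp [prefixL]

/-! #### Take-compatibility of the Grigorchuk generators -/

namespace Grig

theorem aFun_take : ∀ (w : List Bool) (k : ℕ), aFun (w.take k) = (aFun w).take k := by
  intro w k
  match w, k with
  | [], k => simp [aFun]
  | x :: w, 0 => simp [aFun]
  | x :: w, k+1 => simp [aFun]

theorem bcd_take : ∀ (w : List Bool) (k : ℕ),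
    bFun (w.take k) = (bFun w).take k ∧ cFun (w.take k) = (cFun w).take k ∧
      dFun (w.take k) = (dFun w).take k := by
  intro w
  induction w with
  | nil => intro k; simp [bFun, cFun, dFun]
  | cons x w ih =>
    intro k
    cases k with
    | zero =>
      rcases x with _|_ <;> simp [bFun, cFun, dFun]
    | succ k =>
      rcases x with _|_
      · simp [bFun, cFun, dFun, aFun_take]
      · simp [bFun, cFun, dFun, (ih k).1, (ih k).2.1, (ih k).2.2]

theorem bFun_take (w : List Bool) (k : ℕ) : bFun (w.take k) = (bFun w).take k :=
  (bcd_take w k).1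
theorem cFun_take (w : List Bool) (k : ℕ) : cFun (w.take k) = (cFun w).take k :=
  (bcd_take w k).2.1
theorem dFun_take (w : List Bool) (k : ℕ) : dFun (w.take k) = (dFun w).take k :=
  (bcd_take w k).2.2

end Grig


/-! #### Boundary action basics -/

/-- A nice (automaton-like) map on words: length- and prefix-preserving. -/
def NiceFun (f : List Bool → List Bool) : Prop :=
  (∀ w, (f w).length = w.length) ∧ ∀ w k, f (w.take k) = (f w).take k

theorem nice_aFun : NiceFun Grig.aFun := ⟨Grig.aFun_length, Grig.aFun_take⟩
theorem nice_bFun : NiceFun Grig.bFun := ⟨Grig.bFun_length, Grig.bFun_take⟩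
theorem nice_cFun : NiceFun Grig.cFun := ⟨Grig.cFun_length, Grig.cFun_take⟩
theorem nice_dFun : NiceFun Grig.dFun := ⟨Grig.dFun_length, Grig.dFun_take⟩

theorem getD_of_lt {α : Type*} (l : List α) (d : α) {n : ℕ} (h : n < l.length) :
    l.getD n d = l[n] := by
  rw [List.getD_eq_getElem?_getD, List.getElem?_eq_getElem h]
  rfl

theorem bAct_eval {f : List Bool → List Bool} (hf : NiceFun f)
    {P : Equiv.Perm (List Bool)} (hP : ⇑P = f) (ξ : ℕ → Bool) {m k : ℕ} (hmk : m < k) :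
    boundaryAct P ξ m = (f (prefixL k ξ)).getD m false := by
  show (P (List.ofFn fun i : Fin (m+1) => ξ i)).getD m false = _
  rw [hP]
  rw [show (List.ofFn fun i : Fin (m+1) => ξ i) = prefixL (m+1) ξ from rfl,
    prefixL_take (show m + 1 ≤ k from hmk) ξ, hf.2, getD_take' _ _ (Nat.lt_succ_self m)]

theorem prefixL_bAct {f : List Bool → List Bool} (hf : NiceFun f)
    {P : Equiv.Perm (List Bool)} (hP : ⇑P = f) (ξ : ℕ → Bool) (k : ℕ) :
    prefixL k (boundaryAct P ξ) = f (prefixL k ξ) := by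
  apply List.ext_getElem
  · simp [hf.1]
  · intro i h1 h2
    have hik : i < k := by simpa using h1
    have : (prefixL k (boundaryAct P ξ))[i] = boundaryAct P ξ i := by
      simp [prefixL]
    rw [this, bAct_eval hf hP ξ hik, getD_of_lt]

/-- Truncation of a boundary point to a level-`n` vertex. -/
def truncF (n : ℕ) (ξ : ℕ → Bool) : TV.XL n := fun i => ξ i

theorem ofFn_truncF (n : ℕ) (ξ : ℕ → Bool) : List.ofFn (truncF n ξ) = prefixL n ξ := rfl

theorem levelFun_compat {f : List Bool → List Bool} (hf : NiceFun f)
    {P : Equiv.Perm (List Bool)} (hP : ⇑P = f) (n : ℕ) (ξ : ℕ → Bool) :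
    Grig.levelFun n f (truncF n ξ) = truncF n (boundaryAct P ξ) := by
  funext i
  show (f (List.ofFn (truncF n ξ))).getD i false = boundaryAct P ξ i
  rw [ofFn_truncF, ← bAct_eval hf hP ξ i.isLt]

theorem aLev_compat (n : ℕ) (ξ : ℕ → Bool) :
    Grig.aLev n (truncF n ξ) = truncF n (boundaryAct Grig.aPerm ξ) := by
  have h1 : ⇑(Grig.aLev n) = Grig.levelFun n Grig.aFun := Function.Involutive.coe_toPerm _
  have h2 : ⇑Grig.aPerm = Grig.aFun := Function.Involutive.coe_toPerm _
  rw [show Grig.aLev n (truncF n ξ) = Grig.levelFun n Grig.aFun (truncF n ξ) from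
    congrFun h1 _]
  exact levelFun_compat nice_aFun h2 n ξ

theorem bLev_compat (n : ℕ) (ξ : ℕ → Bool) :
    Grig.bLev n (truncF n ξ) = truncF n (boundaryAct Grig.bPerm ξ) := by
  have h1 : ⇑(Grig.bLev n) = Grig.levelFun n Grig.bFun := Function.Involutive.coe_toPerm _
  have h2 : ⇑Grig.bPerm = Grig.bFun := Function.Involutive.coe_toPerm _
  rw [show Grig.bLev n (truncF n ξ) = Grig.levelFun n Grig.bFun (truncF n ξ) from
    congrFun h1 _]
  exact levelFun_compat nice_bFun h2 n ξ

theorem cLev_compat (n : ℕ) (ξ : ℕ → Bool) :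
    Grig.cLev n (truncF n ξ) = truncF n (boundaryAct Grig.cPerm ξ) := by
  have h1 : ⇑(Grig.cLev n) = Grig.levelFun n Grig.cFun := Function.Involutive.coe_toPerm _
  have h2 : ⇑Grig.cPerm = Grig.cFun := Function.Involutive.coe_toPerm _
  rw [show Grig.cLev n (truncF n ξ) = Grig.levelFun n Grig.cFun (truncF n ξ) from
    congrFun h1 _]
  exact levelFun_compat nice_cFun h2 n ξ

theorem dLev_compat (n : ℕ) (ξ : ℕ → Bool) :
    Grig.dLev n (truncF n ξ) = truncF n (boundaryAct Grig.dPerm ξ) := by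
  have h1 : ⇑(Grig.dLev n) = Grig.levelFun n Grig.dFun := Function.Involutive.coe_toPerm _
  have h2 : ⇑Grig.dPerm = Grig.dFun := Function.Involutive.coe_toPerm _
  rw [show Grig.dLev n (truncF n ξ) = Grig.levelFun n Grig.dFun (truncF n ξ) from
    congrFun h1 _]
  exact levelFun_compat nice_dFun h2 n ξ

theorem aPerm_inv : (Grig.aPerm)⁻¹ = Grig.aPerm := by
  apply Equiv.ext; intro x; rfl
theorem bPerm_inv : (Grig.bPerm)⁻¹ = Grig.bPerm := by
  apply Equiv.ext; intro x; rfl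
theorem cPerm_inv : (Grig.cPerm)⁻¹ = Grig.cPerm := by
  apply Equiv.ext; intro x; rfl
theorem dPerm_inv : (Grig.dPerm)⁻¹ = Grig.dPerm := by
  apply Equiv.ext; intro x; rfl

theorem aLev_inv (n : ℕ) : (Grig.aLev n)⁻¹ = Grig.aLev n := by
  apply Equiv.ext; intro x; rfl
theorem bLev_inv (n : ℕ) : (Grig.bLev n)⁻¹ = Grig.bLev n := by
  apply Equiv.ext; intro x; rfl
theorem cLev_inv (n : ℕ) : (Grig.cLev n)⁻¹ = Grig.cLev n := by
  apply Equiv.ext; intro x; rfl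
theorem dLev_inv (n : ℕ) : (Grig.dLev n)⁻¹ = Grig.dLev n := by
  apply Equiv.ext; intro x; rfl

theorem aa_boundary (ξ : ℕ → Bool) :
    boundaryAct Grig.aPerm (boundaryAct Grig.aPerm ξ) = ξ := by
  have h2 : ⇑Grig.aPerm = Grig.aFun := Function.Involutive.coe_toPerm _
  funext m
  rw [bAct_eval nice_aFun h2 _ (Nat.lt_succ_self m), prefixL_bAct nice_aFun h2 ξ (m+1),
    Grig.aFun_involutive _, getD_prefixL (Nat.lt_succ_self m)]

theorem wordApplyB_nil (ξ : ℕ → Bool) : wordApplyB [] ξ = ξ := rfl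
theorem wordApplyB_cons (P : Equiv.Perm (List Bool)) (l : List (Equiv.Perm (List Bool)))
    (ξ : ℕ → Bool) : wordApplyB (P :: l) ξ = wordApplyB l (boundaryAct P ξ) := rfl

/-! #### The tripled word -/

def tripleWord : List (Equiv.Perm (List Bool)) → List (Equiv.Perm (List Bool))
  | [] => []
  | P :: l => Grig.aPerm :: P :: Grig.aPerm :: tripleWord l

theorem tripleWord_length : ∀ l, (tripleWord l).length = 3 * l.length := by
  intro l
  induction l with
  | nil => rfl
  | cons P l ih => simp [tripleWord, ih]; ring

theorem tripleWord_mem : ∀ l, (∀ P ∈ l, P ∈ Grig.Sset) → ∀ Q ∈ tripleWord l, Q ∈ Grig.Sset := by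
  intro l
  induction l with
  | nil => intro _ Q hQ; simp [tripleWord] at hQ
  | cons P l ih =>
    intro hl Q hQ
    simp only [tripleWord, List.mem_cons] at hQ
    rcases hQ with h | h | h | h
    · rw [h]; exact Or.inl rfl
    · rw [h]; exact hl P List.mem_cons_self
    · rw [h]; exact Or.inl rfl
    · exact ih (fun x hx => hl x (List.mem_cons_of_mem _ hx)) Q h

theorem tripleWord_drop : ∀ (j : ℕ) (l : List (Equiv.Perm (List Bool))),
    tripleWord (l.drop j) = (tripleWord l).drop (3 * j) := by
  intro j
  induction j with
  | zero => intro l; rfl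
  | succ j ih =>
    intro l
    cases l with
    | nil => simp [tripleWord]
    | cons P l =>
      have : 3 * (j + 1) = 3 * j + 1 + 1 + 1 := by ring
      rw [this]
      simp only [List.drop_succ_cons, tripleWord]
      exact ih l

theorem tripleWord_apply : ∀ (l : List (Equiv.Perm (List Bool))) (ξ : ℕ → Bool),
    wordApplyB (tripleWord l) ξ =
      boundaryAct Grig.aPerm (wordApplyB l (boundaryAct Grig.aPerm ξ)) := by
  intro l
  induction l with
  | nil => intro ξ; show ξ = _; rw [wordApplyB_nil, aa_boundary]
  | cons P l ih =>
    intro ξ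
    rw [tripleWord, wordApplyB_cons, wordApplyB_cons, wordApplyB_cons, ih, aa_boundary,
      wordApplyB_cons]


/-! #### `basePermHomeo` as a monoid homomorphism -/

def BPhom (X Y : Type*) [TopologicalSpace X] [TopologicalSpace Y] [DiscreteTopology Y] :
    Equiv.Perm Y →* ((X × Y) ≃ₜ (X × Y)) where
  toFun := basePermHomeo
  map_one' := Homeomorph.ext fun p => rfl
  map_mul' e f := Homeomorph.ext fun p => rfl

theorem BPhom_apply {X Y : Type*} [TopologicalSpace X] [TopologicalSpace Y] [DiscreteTopology Y]
    (e : Equiv.Perm Y) (p : X × Y) : BPhom X Y e p = (p.1, e p.2) := rfl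

theorem type1Gen_eq_BPhom (n : ℕ) (s : Equiv.Perm (TV.XL n)) :
    TV.type1Gen n s = BPhom Cantor (TV.XL n × Fin 4) (s.prodCongr (Equiv.refl (Fin 4))) := rfl

theorem type1Gen_mul (n : ℕ) (s t : Equiv.Perm (TV.XL n)) :
    TV.type1Gen n s * TV.type1Gen n t = TV.type1Gen n (s * t) :=
  Homeomorph.ext fun _ => rfl

theorem type1Gen_one (n : ℕ) : TV.type1Gen n 1 = (1 : TV.Mn n ≃ₜ TV.Mn n) :=
  Homeomorph.ext fun _ => rfl

/-! #### The normal-form structure of words over `T_n` -/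

theorem main_struct (n : ℕ) (w : List (TV.Mn n ≃ₜ TV.Mn n)) :
    ∃ (l : List (Equiv.Perm (List Bool))) (E : ℕ → Equiv.Perm (TV.XL n)) (J : ℕ → ℕ),
      (∀ P ∈ l, P ∈ Grig.Sset) ∧ l.length ≤ w.length ∧ J 0 = 0 ∧
      (∀ i, ((w.map (gpart n)).drop i).prod = TV.type1Gen n (E i)) ∧
      (∀ i ξ, (E i)⁻¹ (truncF n ξ) = truncF n (wordApplyB (l.drop (J i)) ξ)) := by
  induction w with
  | nil =>
    refine ⟨[], fun _ => 1, fun _ => 0, by simp, by simp, rfl, ?_, ?_⟩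
    · intro i
      simp [type1Gen_one]
    · intro i ξ
      simp [wordApplyB_nil]
  | cons t w ih =>
    obtain ⟨l, E, J, hmem, hlen, hJ0, hprod, hcompat⟩ := ih
    by_cases ht : t ∈ TV.Type1Set n
    · -- a type-1 letter
      have hgp : gpart n t = t := by unfold gpart; rw [if_pos ht]
      have hcases : ∃ (s : Equiv.Perm (TV.XL n)) (P : Equiv.Perm (List Bool)),
          P ∈ Grig.Sset ∧ t = TV.type1Gen n s ∧ s⁻¹ = s ∧
          ∀ ξ, s (truncF n ξ) = truncF n (boundaryAct P ξ) := by
        simp only [TV.Type1Set, Set.mem_insert_iff, Set.mem_singleton_iff] at ht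
        rcases ht with rfl | rfl | rfl | rfl
        · exact ⟨Grig.aLev n, Grig.aPerm, Or.inl rfl, rfl, aLev_inv n, aLev_compat n⟩
        · exact ⟨Grig.bLev n, Grig.bPerm, Or.inr (Or.inl rfl), rfl, bLev_inv n, bLev_compat n⟩
        · exact ⟨Grig.cLev n, Grig.cPerm, Or.inr (Or.inr (Or.inl rfl)), rfl, cLev_inv n,
            cLev_compat n⟩
        · exact ⟨Grig.dLev n, Grig.dPerm, Or.inr (Or.inr (Or.inr rfl)), rfl, dLev_inv n,
            dLev_compat n⟩
      obtain ⟨s, P, hPmem, hts, hsinv, hscompat⟩ := hcases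
      refine ⟨P :: l, fun i => match i with | 0 => s * E 0 | (i+1) => E i,
        fun i => match i with | 0 => 0 | (i+1) => J i + 1, ?_, ?_, rfl, ?_, ?_⟩
      · intro Q hQ
        rcases List.mem_cons.mp hQ with rfl | h
        · exact hPmem
        · exact hmem Q h
      · simpa using Nat.succ_le_succ hlen
      · intro i
        match i with
        | 0 =>
          rw [List.drop_zero, List.map_cons, List.prod_cons, hgp, hts, ← List.drop_zero
            (l := List.map (gpart n) w), hprod 0, type1Gen_mul]
        | (i+1) =>
          rw [List.map_cons, List.drop_succ_cons]
          exact hprod i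
      · intro i ξ
        match i with
        | 0 =>
          show ((s * E 0)⁻¹) (truncF n ξ) = truncF n (wordApplyB ((P :: l).drop 0) ξ)
          rw [mul_inv_rev, Equiv.Perm.mul_apply, hsinv, hscompat, hcompat 0, hJ0,
            List.drop_zero, List.drop_zero, ← wordApplyB_cons]
        | (i+1) =>
          show (E i)⁻¹ (truncF n ξ) = truncF n (wordApplyB ((P :: l).drop (J i + 1)) ξ)
          rw [List.drop_succ_cons]
          exact hcompat i ξ
    · -- not a type-1 letter
      have hgp : gpart n t = 1 := by unfold gpart; rw [if_neg ht]
      refine ⟨l, fun i => match i with | 0 => E 0 | (i+1) => E i,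
        fun i => match i with | 0 => J 0 | (i+1) => J i, hmem, le_trans hlen (by simp),
        hJ0, ?_, ?_⟩
      · intro i
        match i with
        | 0 =>
          rw [List.drop_zero, List.map_cons, List.prod_cons, hgp, one_mul,
            ← List.drop_zero (l := List.map (gpart n) w), hprod 0]
        | (i+1) =>
          rw [List.map_cons, List.drop_succ_cons]
          exact hprod i
      · intro i ξ
        match i with
        | 0 => exact hcompat 0 ξ
        | (i+1) => exact hcompat i ξ


/-! #### The support set of the third factor -/

/-- The (level-`n`) set supporting the third normal-form factor: truncations of the
inverted orbit of `ρ` and `a`-translates of truncations of the inverted orbit of the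
tripled word, placed on the `0`-th sheet. -/
def ASet (n : ℕ) (O₁ O₂ : Set (ℕ → Bool)) : Set (TV.XL n × Fin 4) :=
  (fun ζ => (truncF n ζ, (0 : Fin 4))) '' O₁ ∪
    (fun ζ => (truncF n (boundaryAct Grig.aPerm ζ), (0 : Fin 4))) '' O₂

theorem trunc_rho (n : ℕ) : truncF n rhoInf = TV.rhoL n := rfl

theorem trunc_theta (n : ℕ) :
    truncF n (boundaryAct Grig.aPerm rhoInf) = TV.thetaL n := by
  have h2 : ⇑Grig.aPerm = Grig.aFun := Function.Involutive.coe_toPerm _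
  funext i
  show boundaryAct Grig.aPerm rhoInf i = TV.thetaL n i
  rw [bAct_eval nice_aFun h2 _ (Nat.lt_succ_self (i : ℕ))]
  have hpre : prefixL ((i : ℕ) + 1) rhoInf = true :: List.replicate (i : ℕ) true := by
    rw [show prefixL ((i : ℕ) + 1) rhoInf = List.ofFn (fun _ : Fin ((i : ℕ) + 1) => true)
      from rfl, List.ofFn_const, List.replicate_succ]
  rw [hpre]
  show (Grig.aFun (true :: List.replicate (i : ℕ) true)).getD (i : ℕ) false = _
  rw [show Grig.aFun (true :: List.replicate (i : ℕ) true)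
    = false :: List.replicate (i : ℕ) true from rfl]
  rcases Nat.eq_zero_or_pos (i : ℕ) with h0 | hpos
  · rw [h0]
    simp [TV.thetaL, h0]
  · obtain ⟨j, hj⟩ := Nat.exists_eq_add_of_lt hpos
    have : (i : ℕ) = j + 1 := by omega
    rw [this]
    show (List.replicate (j + 1) true).getD j false = TV.thetaL n i
    rw [getD_of_lt _ _ (by simp), List.getElem_replicate]
    simp [TV.thetaL, this]

theorem swap_stable {β : Type*} [DecidableEq β] (S : Set β) {u v : β} (hu : u ∈ S)
    (hv : v ∈ S) :
    (∀ q ∉ S, Equiv.swap u v q = q) ∧ ∀ q ∈ S, Equiv.swap u v q ∈ S := by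
  constructor
  · intro q hq
    refine Equiv.swap_apply_of_ne_of_ne (fun h => hq ?_) (fun h => hq ?_)
    · rw [h]; exact hu
    · rw [h]; exact hv
  · intro q hq
    by_cases hqu : q = u
    · rw [hqu, Equiv.swap_apply_left]; exact hv
    by_cases hqv : q = v
    · rw [hqv, Equiv.swap_apply_right]; exact hu
    · rw [Equiv.swap_apply_of_ne_of_ne hqu hqv]; exact hq

theorem perm_list_stable {β : Type*} (S : Set β) (L : List (Equiv.Perm β))
    (h : ∀ c ∈ L, (∀ q ∉ S, c q = q) ∧ ∀ q ∈ S, c q ∈ S) :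
    (∀ q ∉ S, L.prod q = q) ∧ ∀ q ∈ S, L.prod q ∈ S := by
  induction L with
  | nil => exact ⟨fun q _ => rfl, fun q hq => hq⟩
  | cons c L ih =>
    have hc := h c List.mem_cons_self
    have hL := ih fun c' hc' => h c' (List.mem_cons_of_mem _ hc')
    rw [List.prod_cons]
    constructor
    · intro q hq
      rw [Equiv.Perm.mul_apply, hL.1 q hq, hc.1 q hq]
    · intro q hq
      rw [Equiv.Perm.mul_apply]
      exact hc.2 _ (hL.2 q hq)

/-- Normal form of the third factor: it is a base permutation supported on the
inverted-orbit set. -/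
theorem pjfac_norm (n ℓ : ℕ) (w : List (TV.Mn n ≃ₜ TV.Mn n)) (hw : w.length ≤ ℓ) :
    ∃ l : List (Equiv.Perm (List Bool)),
      (∀ P ∈ l, P ∈ Grig.Sset) ∧ l.length ≤ ℓ ∧
      ∃ π : Equiv.Perm (TV.XL n × Fin 4),
        pjfac n 3 w = BPhom Cantor (TV.XL n × Fin 4) π ∧
        (∀ q ∉ ASet n (invOrbitB l rhoInf) (invOrbitB (tripleWord l) rhoInf), π q = q) ∧
        (∀ q ∈ ASet n (invOrbitB l rhoInf) (invOrbitB (tripleWord l) rhoInf),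
          π q ∈ ASet n (invOrbitB l rhoInf) (invOrbitB (tripleWord l) rhoInf)) := by
  classical
  obtain ⟨l, E, J, hmem, hlen, hJ0, hprod, hcompat⟩ := main_struct n w
  refine ⟨l, hmem, le_trans hlen hw, ?_⟩
  set S := ASet n (invOrbitB l rhoInf) (invOrbitB (tripleWord l) rhoInf) with hS
  set F : Fin w.length → Equiv.Perm (TV.XL n × Fin 4) := fun i =>
    ((E i).prodCongr (Equiv.refl (Fin 4)))⁻¹ *
      (if w.get i = TV.tauN n then
        Equiv.swap (TV.rhoL n, (0 : Fin 4)) (TV.thetaL n, (0 : Fin 4)) else 1) *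
      ((E i).prodCongr (Equiv.refl (Fin 4))) with hF
  refine ⟨(List.ofFn F).prod, ?_, ?_⟩
  · -- the equality
    have hterm : ∀ i : Fin w.length,
        (((w.map (gpart n)).drop (i : ℕ)).prod)⁻¹ * apart n 3 (w.get i) *
          ((w.map (gpart n)).drop (i : ℕ)).prod
          = BPhom Cantor (TV.XL n × Fin 4) (F i) := by
      intro i
      have happ : apart n 3 (w.get i) = BPhom Cantor (TV.XL n × Fin 4)
          (if w.get i = TV.tauN n then
            Equiv.swap (TV.rhoL n, (0 : Fin 4)) (TV.thetaL n, (0 : Fin 4)) else 1) := by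
        unfold apart
        have htype : TV.typeSet n 3 = {TV.tauN n} := rfl
        have hmemiff : (w.get i ∈ TV.typeSet n 3) ↔ w.get i = TV.tauN n := by
          rw [htype]; exact Set.mem_singleton_iff
        by_cases h : w.get i = TV.tauN n
        · rw [if_pos (hmemiff.mpr h), if_pos h, h]
          rfl
        · rw [if_neg (fun hh => h (hmemiff.mp hh)), if_neg h, map_one]
      rw [hprod (i : ℕ), happ, type1Gen_eq_BPhom, ← map_inv, ← map_mul, ← map_mul]
    show pjfac n 3 w = _
    unfold pjfac
    rw [show (List.ofFn fun i : Fin w.length =>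
        (((w.map (gpart n)).drop (i : ℕ)).prod)⁻¹ * apart n 3 (w.get i) *
          ((w.map (gpart n)).drop (i : ℕ)).prod)
        = List.ofFn (fun i => BPhom Cantor (TV.XL n × Fin 4) (F i))
      from congrArg List.ofFn (funext hterm)]
    rw [show List.ofFn (fun i => BPhom Cantor (TV.XL n × Fin 4) (F i))
        = (List.ofFn F).map (BPhom Cantor (TV.XL n × Fin 4)) from (List.map_ofFn).symm]
    exact (map_list_prod (BPhom Cantor (TV.XL n × Fin 4)) _).symm
  · -- the support property
    have hFi : ∀ i : Fin w.length, (∀ q ∉ S, F i q = q) ∧ ∀ q ∈ S, F i q ∈ S := by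
      intro i
      by_cases h : w.get i = TV.tauN n
      · have hswap : F i = Equiv.swap
            (((E (i : ℕ))⁻¹ (TV.rhoL n), (0 : Fin 4)) : TV.XL n × Fin 4)
            ((E (i : ℕ))⁻¹ (TV.thetaL n), (0 : Fin 4)) := by
          rw [hF]
          simp only [if_pos h]
          have := Equiv.swap_apply_apply (((E (i : ℕ)).prodCongr (Equiv.refl (Fin 4)))⁻¹)
            ((TV.rhoL n, (0 : Fin 4)) : TV.XL n × Fin 4) (TV.thetaL n, (0 : Fin 4))
          rw [inv_inv] at this
          rw [← this]
          rfl
        rw [hswap]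
        have hxmem : (((E (i : ℕ))⁻¹ (TV.rhoL n), (0 : Fin 4)) : TV.XL n × Fin 4) ∈ S := by
          rw [hS]
          left
          refine ⟨wordApplyB (l.drop (J (i : ℕ))) rhoInf, ⟨J (i : ℕ), rfl⟩, ?_⟩
          dsimp only
          rw [← hcompat (i : ℕ) rhoInf, trunc_rho]
        have hymem : (((E (i : ℕ))⁻¹ (TV.thetaL n), (0 : Fin 4)) : TV.XL n × Fin 4) ∈ S := by
          rw [hS]
          right
          refine ⟨wordApplyB ((tripleWord l).drop (3 * J (i : ℕ))) rhoInf,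
            ⟨3 * J (i : ℕ), rfl⟩, ?_⟩
          have h1 := tripleWord_apply (l.drop (J (i : ℕ))) rhoInf
          rw [tripleWord_drop] at h1
          dsimp only
          rw [h1, aa_boundary, ← hcompat (i : ℕ), trunc_theta]
        exact swap_stable S hxmem hymem
      · have h1 : F i = 1 := by
          rw [hF]
          dsimp only
          rw [if_neg h, mul_one, inv_mul_cancel]
        rw [h1]
        exact ⟨fun q _ => rfl, fun q hq => hq⟩
    refine perm_list_stable S (List.ofFn F) ?_
    intro c hc
    rw [List.mem_ofFn] at hc
    obtain ⟨i, rfl⟩ := hc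
    exact hFi i


/-! #### Finiteness and cardinality of inverted orbits -/

theorem invOrbit_card_le (l : List (Equiv.Perm (List Bool))) (ξ : ℕ → Bool) :
    (invOrbitB l ξ).Finite ∧ Nat.card (invOrbitB l ξ) ≤ l.length + 1 := by
  have hsurj : Function.Surjective (fun i : Fin (l.length + 1) =>
      (⟨wordApplyB (l.drop (i : ℕ)) ξ, ⟨(i : ℕ), rfl⟩⟩ : invOrbitB l ξ)) := by
    rintro ⟨x, i, hx⟩
    rcases le_or_gt i l.length with hi | hi
    · exact ⟨⟨i, Nat.lt_succ_of_le hi⟩, Subtype.ext hx.symm⟩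
    · refine ⟨⟨l.length, Nat.lt_succ_self _⟩, Subtype.ext ?_⟩
      show wordApplyB (l.drop l.length) ξ = x
      rw [List.drop_length, hx, List.drop_eq_nil_of_le (le_of_lt hi)]
  haveI hfin : Finite (invOrbitB l ξ) := Finite.of_surjective _ hsurj
  refine ⟨Set.toFinite _, ?_⟩
  have := Nat.card_le_card_of_surjective _ hsurj
  simpa using this

theorem card_invOrbit_le_DeltaB {m : ℕ} {l : List (Equiv.Perm (List Bool))}
    (hmem : ∀ P ∈ l, P ∈ Grig.Sset) (hlen : l.length ≤ m) :
    Nat.card (invOrbitB l rhoInf) ≤ DeltaB m := by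
  apply le_csSup
  · refine ⟨m + 1, ?_⟩
    rintro k ⟨l', hmem', hlen', rfl⟩
    exact le_trans (invOrbit_card_le l' rhoInf).2 (by omega)
  · exact ⟨l, hmem, hlen, rfl⟩

/-- The collection of inverted-orbit sets of words of length at most `m`. -/
def Coll (m : ℕ) : Set (Set (ℕ → Bool)) :=
  {O | ∃ l : List (Equiv.Perm (List Bool)),
    (∀ x ∈ l, x ∈ Grig.Sset) ∧ l.length ≤ m ∧ O = invOrbitB l rhoInf}

theorem NorbB_eq (m : ℕ) : NorbB m = Nat.card (Coll m) := rfl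

theorem Sset_finite : Grig.Sset.Finite := by
  unfold Grig.Sset
  exact (((Set.finite_singleton _).insert _).insert _).insert _

theorem Coll_finite (m : ℕ) : (Coll m).Finite := by
  haveI : Finite ↥Grig.Sset := Sset_finite.to_subtype
  have h : Coll m ⊆ (fun l : List ↥Grig.Sset => invOrbitB (l.map Subtype.val) rhoInf) ''
      {l : List ↥Grig.Sset | l.length ≤ m} := by
    rintro O ⟨l, hmem, hlen, rfl⟩
    refine ⟨l.attach.map (fun x => ⟨x.1, hmem x.1 x.2⟩), by simpa using hlen, ?_⟩
    dsimp only
    rw [List.map_map,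
      show List.map (Subtype.val ∘ fun x : {x // x ∈ l} =>
        (⟨x.1, hmem x.1 x.2⟩ : ↥Grig.Sset)) l.attach = l by simp]
  exact Set.Finite.subset ((List.finite_length_le _ m).image _) h

theorem exists_emb {β : Type*} {S : Set β} (hfin : S.Finite) {K : ℕ}
    (hcard : Nat.card S ≤ K) : Nonempty (↥S ↪ Fin K) := by
  haveI := hfin.to_subtype
  obtain ⟨mm, ⟨e⟩⟩ := Finite.exists_equiv_fin ↥S
  have hm : Nat.card ↥S = mm := Nat.card_eq_of_equiv_fin e
  exact ⟨e.toEmbedding.trans (Fin.castLEOrderEmb (by omega)).toEmbedding⟩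

open Classical in
/-- Encoding of a permutation stabilizing `S` through an embedding of `S` into `Fin K`. -/
noncomputable def Gfun {β : Type*} {K : ℕ} (S : Set β) (ι : ↥S ↪ Fin K)
    (π : Equiv.Perm β) : Fin K → Option (Fin K) := fun r =>
  if h : ∃ s : ↥S, ι s = r then
    (if hmem : π (h.choose : β) ∈ S then some (ι ⟨π (h.choose : β), hmem⟩) else none)
  else none

theorem Gfun_inj {β : Type*} {K : ℕ} (S : Set β) (ι : ↥S ↪ Fin K) {π π' : Equiv.Perm β}
    (hout : ∀ q ∉ S, π q = q) (hin : ∀ q ∈ S, π q ∈ S)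
    (hout' : ∀ q ∉ S, π' q = q) (hin' : ∀ q ∈ S, π' q ∈ S)
    (h : Gfun S ι π = Gfun S ι π') : π = π' := by
  apply Equiv.ext
  intro q
  by_cases hq : q ∈ S
  · have hex : ∃ s : ↥S, ι s = ι ⟨q, hq⟩ := ⟨⟨q, hq⟩, rfl⟩
    have hch : hex.choose = ⟨q, hq⟩ := ι.injective hex.choose_spec
    have h1 := congrFun h (ι ⟨q, hq⟩)
    rw [Gfun, Gfun, dif_pos hex, dif_pos hex, hch] at h1
    rw [dif_pos (hin q hq), dif_pos (hin' q hq)] at h1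
    have h2 := ι.injective (Option.some.inj h1)
    exact congrArg Subtype.val h2
  · rw [hout q hq, hout' q hq]

theorem card_Pjset_le (n ℓ K : ℕ)
    (hK : ∀ O₁ ∈ Coll ℓ, ∀ O₂ ∈ Coll (3 * ℓ),
      (ASet n O₁ O₂).Finite ∧ Nat.card (ASet n O₁ O₂) ≤ K) :
    Nat.card (Pjset n 3 ℓ) ≤ NorbB ℓ * NorbB (3 * ℓ) * (K + 1) ^ K := by
  classical
  haveI h1 : Finite ↥(Coll ℓ) := (Coll_finite ℓ).to_subtype
  haveI h2 : Finite ↥(Coll (3 * ℓ)) := (Coll_finite _).to_subtype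
  set SS : ↥(Coll ℓ) × ↥(Coll (3 * ℓ)) → Set (TV.XL n × Fin 4) :=
    fun pr => ASet n pr.1 pr.2 with hSS
  have hSSp : ∀ pr, (SS pr).Finite ∧ Nat.card (SS pr) ≤ K :=
    fun pr => hK _ pr.1.2 _ pr.2.2
  let ι : ∀ pr, ↥(SS pr) ↪ Fin K := fun pr => (exists_emb (hSSp pr).1 (hSSp pr).2).some
  have hdata : ∀ p : ↥(Pjset n 3 ℓ),
      ∃ d : (↥(Coll ℓ) × ↥(Coll (3 * ℓ))) × Equiv.Perm (TV.XL n × Fin 4),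
      (p : TV.Mn n ≃ₜ TV.Mn n) = BPhom Cantor (TV.XL n × Fin 4) d.2 ∧
      (∀ q ∉ SS d.1, d.2 q = q) ∧ (∀ q ∈ SS d.1, d.2 q ∈ SS d.1) := by
    rintro ⟨p, hp⟩
    obtain ⟨w, hwmem, hwlen, rfl⟩ := hp
    obtain ⟨l, hl, hllen, π, hπ, hπout, hπin⟩ := pjfac_norm n ℓ w hwlen
    have hO1 : invOrbitB l rhoInf ∈ Coll ℓ := ⟨l, hl, hllen, rfl⟩
    have hO2 : invOrbitB (tripleWord l) rhoInf ∈ Coll (3 * ℓ) :=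
      ⟨tripleWord l, tripleWord_mem l hl, by rw [tripleWord_length]; omega, rfl⟩
    exact ⟨((⟨_, hO1⟩, ⟨_, hO2⟩), π), hπ, hπout, hπin⟩
  choose dd hBP hout hin using hdata
  have hinj : Function.Injective (fun p : ↥(Pjset n 3 ℓ) =>
      ((dd p).1, Gfun (SS (dd p).1) (ι (dd p).1) (dd p).2)) := by
    intro p p' he
    have he' : ((dd p).1, Gfun (SS (dd p).1) (ι (dd p).1) (dd p).2)
        = ((dd p').1, Gfun (SS (dd p').1) (ι (dd p').1) (dd p').2) := he
    have e1 := (Prod.ext_iff.mp he').1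
    have e2 := (Prod.ext_iff.mp he').2
    
    rw [← e1] at e2
    have ho' := hout p'
    have hi' := hin p'
    rw [← e1] at ho' hi'
    have hππ : (dd p).2 = (dd p').2 :=
      Gfun_inj (SS (dd p).1) (ι (dd p).1) (hout p) (hin p) ho' hi' e2
    apply Subtype.ext
    rw [hBP p, hBP p', hππ]
  have hcard := Nat.card_le_card_of_injective _ hinj
  refine le_trans hcard (le_of_eq ?_)
  have hfinK : Nat.card (Fin K) = K := Nat.card_eq_of_equiv_fin (Equiv.refl _)
  rw [Nat.card_prod, Nat.card_prod, Nat.card_fun, Finite.card_option, hfinK, NorbB_eq, NorbB_eq]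


theorem ASet_card (n m₁ m₂ : ℕ) {O₁ O₂ : Set (ℕ → Bool)} (h₁ : O₁ ∈ Coll m₁)
    (h₂ : O₂ ∈ Coll m₂) :
    (ASet n O₁ O₂).Finite ∧ Nat.card (ASet n O₁ O₂) ≤ DeltaB m₁ + DeltaB m₂ := by
  obtain ⟨l₁, h1m, h1l, rfl⟩ := h₁
  obtain ⟨l₂, h2m, h2l, rfl⟩ := h₂
  have f1 : (invOrbitB l₁ rhoInf).Finite := (invOrbit_card_le l₁ rhoInf).1
  have f2 : (invOrbitB l₂ rhoInf).Finite := (invOrbit_card_le l₂ rhoInf).1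
  refine ⟨(f1.image _).union (f2.image _), ?_⟩
  rw [Nat.card_coe_set_eq]
  calc (ASet n (invOrbitB l₁ rhoInf) (invOrbitB l₂ rhoInf)).ncard
      ≤ ((fun ζ => (truncF n ζ, (0 : Fin 4))) '' invOrbitB l₁ rhoInf).ncard +
        ((fun ζ => (truncF n (boundaryAct Grig.aPerm ζ), (0 : Fin 4))) ''
          invOrbitB l₂ rhoInf).ncard := Set.ncard_union_le _ _
    _ ≤ (invOrbitB l₁ rhoInf).ncard + (invOrbitB l₂ rhoInf).ncard :=
        Nat.add_le_add (Set.ncard_image_le f1) (Set.ncard_image_le f2)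
    _ ≤ DeltaB m₁ + DeltaB m₂ := by
        rw [← Nat.card_coe_set_eq, ← Nat.card_coe_set_eq]
        exact Nat.add_le_add (card_invOrbit_le_DeltaB h1m h1l)
          (card_invOrbit_le_DeltaB h2m h2l)


end CountingAux

/-- **Counting the third factor:** if `Δ_ρ^S(m) ≤ C m^α` and `N_ρ^S(m) ≤ exp(C m^α)`
for all `m ≥ 1`, with `C > 0` and `0 < α < 1`, then there is a constant `C₃ > 0` with
`|P_3(ℓ)| ≤ exp(C₃ ℓ^α log ℓ)` for every sufficiently large `n` and every `ℓ ≤ r_n/3`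
(with `2 ≤ ℓ`, so that `log ℓ > 0`). -/
theorem counting_p3 (C α : ℝ) (hC : 0 < C) (hα₀ : 0 < α) (hα₁ : α < 1)
    (hyp : ∀ m : ℕ, 1 ≤ m →
      (DeltaB m : ℝ) ≤ C * (m : ℝ) ^ α ∧ (NorbB m : ℝ) ≤ Real.exp (C * (m : ℝ) ^ α)) :
    ∃ C₃ : ℝ, 0 < C₃ ∧ ∃ N : ℕ, ∀ n : ℕ, N ≤ n →
      ∀ ℓ : ℕ, 2 ≤ ℓ → ℓ ≤ 2 ^ (n / 2) / 3 →
      (Nat.card (Pjset n 3 ℓ) : ℝ) ≤ Real.exp (C₃ * (ℓ : ℝ) ^ α * Real.log ℓ) := by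
  have hlog2 : 0 < Real.log 2 := Real.log_pos (by norm_num)
  have hlog43 : 0 ≤ Real.log (4 * C + 3) := Real.log_nonneg (by linarith)
  set c₂ : ℝ := (4 * C + 2) * (Real.log (4 * C + 3) / Real.log 2 + 1) with hc₂
  have hc₂pos : 0 < c₂ := by
    apply mul_pos (by linarith)
    have h0 : 0 ≤ Real.log (4 * C + 3) / Real.log 2 := div_nonneg hlog43 hlog2.le
    linarith
  have hC₃pos : 0 < 4 * C / Real.log 2 + c₂ := by
    have h0 : 0 < 4 * C / Real.log 2 := div_pos (by linarith) hlog2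
    linarith
  refine ⟨4 * C / Real.log 2 + c₂, hC₃pos, 0, ?_⟩
  intro n _ ℓ hℓ2 _
  have hℓ1 : 1 ≤ ℓ := le_trans (by norm_num) hℓ2
  have hℓR : (2 : ℝ) ≤ (ℓ : ℝ) := by exact_mod_cast hℓ2
  have hℓpos : (0 : ℝ) < (ℓ : ℝ) := by linarith
  have hlogℓ : Real.log 2 ≤ Real.log ℓ := Real.log_le_log (by norm_num) hℓR
  have hlogℓpos : 0 < Real.log ℓ := lt_of_lt_of_le hlog2 hlogℓ
  have hrpow0 : (0 : ℝ) ≤ (ℓ : ℝ) ^ α := Real.rpow_nonneg hℓpos.le α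
  have hrpow1 : (1 : ℝ) ≤ (ℓ : ℝ) ^ α := Real.one_le_rpow (by linarith) hα₀.le
  have hrpowle : (ℓ : ℝ) ^ α ≤ (ℓ : ℝ) := by
    calc (ℓ : ℝ) ^ α ≤ (ℓ : ℝ) ^ (1 : ℝ) :=
          Real.rpow_le_rpow_of_exponent_le (by linarith) hα₁.le
      _ = (ℓ : ℝ) := Real.rpow_one _
  -- the cast of `3 * ℓ`
  have hcast3 : ((3 * ℓ : ℕ) : ℝ) = 3 * (ℓ : ℝ) := by push_cast; ring
  have h3rpow : C * ((3 * ℓ : ℕ) : ℝ) ^ α ≤ 3 * C * (ℓ : ℝ) ^ α := by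
    rw [hcast3, Real.mul_rpow (by norm_num) hℓpos.le]
    have h3a : (3 : ℝ) ^ α ≤ 3 := by
      calc (3 : ℝ) ^ α ≤ (3 : ℝ) ^ (1 : ℝ) :=
            Real.rpow_le_rpow_of_exponent_le (by norm_num) hα₁.le
        _ = 3 := Real.rpow_one _
    have h3a0 : (0 : ℝ) ≤ (3 : ℝ) ^ α := Real.rpow_nonneg (by norm_num) α
    have hh := mul_le_mul_of_nonneg_left (mul_le_mul_of_nonneg_right h3a hrpow0) hC.le
    linarith
  -- the bound `K`
  set K : ℕ := ⌈C * (ℓ : ℝ) ^ α⌉₊ + ⌈C * ((3 * ℓ : ℕ) : ℝ) ^ α⌉₊ with hKdef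
  -- `DeltaB` bounds
  have hD1 : (DeltaB ℓ : ℝ) ≤ C * (ℓ : ℝ) ^ α := (hyp ℓ hℓ1).1
  have hD2 : (DeltaB (3 * ℓ) : ℝ) ≤ C * ((3 * ℓ : ℕ) : ℝ) ^ α := (hyp (3 * ℓ) (by omega)).1
  have hDK1 : DeltaB ℓ ≤ ⌈C * (ℓ : ℝ) ^ α⌉₊ := by
    have h := le_trans hD1 (Nat.le_ceil _)
    exact_mod_cast h
  have hDK2 : DeltaB (3 * ℓ) ≤ ⌈C * ((3 * ℓ : ℕ) : ℝ) ^ α⌉₊ := by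
    have h := le_trans hD2 (Nat.le_ceil _)
    exact_mod_cast h
  have hKb : ∀ O₁ ∈ Coll ℓ, ∀ O₂ ∈ Coll (3 * ℓ),
      (ASet n O₁ O₂).Finite ∧ Nat.card (ASet n O₁ O₂) ≤ K := by
    intro O₁ h₁ O₂ h₂
    obtain ⟨hfin, hle⟩ := ASet_card n ℓ (3 * ℓ) h₁ h₂
    exact ⟨hfin, le_trans hle (by omega)⟩
  have hmain := card_Pjset_le n ℓ K hKb
  have hmainR : (Nat.card (Pjset n 3 ℓ) : ℝ) ≤
      (NorbB ℓ : ℝ) * (NorbB (3 * ℓ) : ℝ) * ((K : ℝ) + 1) ^ K := by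
    exact_mod_cast hmain
  -- bounds for the three factors
  have hN1 : (NorbB ℓ : ℝ) ≤ Real.exp (C * (ℓ : ℝ) ^ α) := (hyp ℓ hℓ1).2
  have hN2 : (NorbB (3 * ℓ) : ℝ) ≤ Real.exp (C * ((3 * ℓ : ℕ) : ℝ) ^ α) :=
    (hyp (3 * ℓ) (by omega)).2
  have hKpos : (0 : ℝ) < (K : ℝ) + 1 := by positivity
  have hpow : Real.exp ((K : ℕ) * Real.log ((K : ℝ) + 1)) = ((K : ℝ) + 1) ^ (K : ℕ) := by
    rw [Real.exp_nat_mul, Real.exp_log hKpos]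
  -- the product bound
  have hprodbound : (Nat.card (Pjset n 3 ℓ) : ℝ) ≤
      Real.exp (C * (ℓ : ℝ) ^ α + C * ((3 * ℓ : ℕ) : ℝ) ^ α +
        (K : ℕ) * Real.log ((K : ℝ) + 1)) := by
    rw [Real.exp_add, Real.exp_add, hpow]
    refine le_trans hmainR ?_
    have hx1 : (0 : ℝ) ≤ (NorbB ℓ : ℝ) := Nat.cast_nonneg _
    have hx2 : (0 : ℝ) ≤ (NorbB (3 * ℓ) : ℝ) := Nat.cast_nonneg _
    have hx3 : (0 : ℝ) ≤ ((K : ℝ) + 1) ^ (K : ℕ) := pow_nonneg hKpos.le _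
    have e1 : (0:ℝ) < Real.exp (C * (ℓ : ℝ) ^ α) := Real.exp_pos _
    have e2 : (0:ℝ) < Real.exp (C * ((3 * ℓ : ℕ) : ℝ) ^ α) := Real.exp_pos _
    exact mul_le_mul (mul_le_mul hN1 hN2 hx2 e1.le) le_rfl hx3 (by positivity)
  refine le_trans hprodbound (Real.exp_le_exp.mpr ?_)
  -- final exponent computation
  have hKR : (K : ℝ) ≤ (4 * C + 2) * (ℓ : ℝ) ^ α := by
    have hceil1 : (⌈C * (ℓ : ℝ) ^ α⌉₊ : ℝ) < C * (ℓ : ℝ) ^ α + 1 :=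
      Nat.ceil_lt_add_one (by positivity)
    have hceil2 : (⌈C * ((3 * ℓ : ℕ) : ℝ) ^ α⌉₊ : ℝ) < C * ((3 * ℓ : ℕ) : ℝ) ^ α + 1 := by
      apply Nat.ceil_lt_add_one
      rw [hcast3]
      positivity
    have hKcast : (K : ℝ) = (⌈C * (ℓ : ℝ) ^ α⌉₊ : ℝ) + (⌈C * ((3 * ℓ : ℕ) : ℝ) ^ α⌉₊ : ℝ) := by
      rw [hKdef]; push_cast; ring
    linarith [h3rpow, hrpow1]
  have hK1le : (K : ℝ) + 1 ≤ (4 * C + 3) * (ℓ : ℝ) := by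
    have h1 : (4 * C + 2) * (ℓ : ℝ) ^ α ≤ (4 * C + 2) * (ℓ : ℝ) :=
      mul_le_mul_of_nonneg_left hrpowle (by linarith)
    linarith
  have hlogK : Real.log ((K : ℝ) + 1) ≤ Real.log (4 * C + 3) + Real.log ℓ := by
    refine le_trans (Real.log_le_log hKpos hK1le) ?_
    rw [Real.log_mul (by linarith) (ne_of_gt hℓpos)]
  have hlog43ℓ : Real.log (4 * C + 3) ≤ Real.log (4 * C + 3) / Real.log 2 * Real.log ℓ := by
    have h1 : Real.log (4 * C + 3) / Real.log 2 * Real.log 2 ≤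
        Real.log (4 * C + 3) / Real.log 2 * Real.log ℓ :=
      mul_le_mul_of_nonneg_left hlogℓ (div_nonneg hlog43 hlog2.le)
    rwa [div_mul_cancel₀ _ (ne_of_gt hlog2)] at h1
  have hlogKnn : 0 ≤ Real.log ((K : ℝ) + 1) := by
    refine Real.log_nonneg ?_
    have h := Nat.cast_nonneg (α := ℝ) K
    linarith
  have hKlogK : (K : ℝ) * Real.log ((K : ℝ) + 1) ≤ c₂ * (ℓ : ℝ) ^ α * Real.log ℓ := by
    have h1 : Real.log ((K : ℝ) + 1) ≤
        (Real.log (4 * C + 3) / Real.log 2 + 1) * Real.log ℓ := by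
      rw [add_mul, one_mul]
      linarith
    have h2 : (K : ℝ) * Real.log ((K : ℝ) + 1) ≤
        ((4 * C + 2) * (ℓ : ℝ) ^ α) * ((Real.log (4 * C + 3) / Real.log 2 + 1) * Real.log ℓ) :=
      mul_le_mul hKR h1 hlogKnn (mul_nonneg (by linarith) hrpow0)
    have h3 : ((4 * C + 2) * (ℓ : ℝ) ^ α) *
        ((Real.log (4 * C + 3) / Real.log 2 + 1) * Real.log ℓ)
        = (4 * C + 2) * (Real.log (4 * C + 3) / Real.log 2 + 1) * (ℓ : ℝ) ^ α *
          Real.log ℓ := by ring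
    rw [hc₂]
    linarith [h2, h3]
  have hfirst : C * (ℓ : ℝ) ^ α + C * ((3 * ℓ : ℕ) : ℝ) ^ α ≤
      4 * C / Real.log 2 * (ℓ : ℝ) ^ α * Real.log ℓ := by
    have h1 : C * (ℓ : ℝ) ^ α + C * ((3 * ℓ : ℕ) : ℝ) ^ α ≤ 4 * C * (ℓ : ℝ) ^ α := by
      linarith [h3rpow]
    have h2 : 4 * C * (ℓ : ℝ) ^ α = 4 * C / Real.log 2 * (ℓ : ℝ) ^ α * Real.log 2 := by
      field_simp
    have h3 : 4 * C / Real.log 2 * (ℓ : ℝ) ^ α * Real.log 2 ≤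
        4 * C / Real.log 2 * (ℓ : ℝ) ^ α * Real.log ℓ := by
      apply mul_le_mul_of_nonneg_left hlogℓ
      positivity
    linarith
  calc C * (ℓ : ℝ) ^ α + C * ((3 * ℓ : ℕ) : ℝ) ^ α + (K : ℕ) * Real.log ((K : ℝ) + 1)
      ≤ 4 * C / Real.log 2 * (ℓ : ℝ) ^ α * Real.log ℓ + c₂ * (ℓ : ℝ) ^ α * Real.log ℓ := by
        linarith
    _ = (4 * C / Real.log 2 + c₂) * (ℓ : ℝ) ^ α * Real.log ℓ := by ring
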